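/- With notation as in the context, set S := Inv N, S̄ := ι(S), N̄ := ι((P₁ ∪ (X \ int N)) ∩ N) and P̄ := (ι(P₁), ι(P₂)). Then P̄ is a weak index pair for F̄ in N̄, i.e. ι(P₂) ⊆ ι(P₁) ⊆ N̄ are compact subsets of X̄ satisfying: (a) F̄(ι(Pᵢ)) ∩ N̄ ⊆ ι(Pᵢ) for i = 1,2; (b) bd_{F̄}(ι(P₁)) ⊆ ι(P₂); (c) Inv_{F̄} N̄ ⊆ int_{X̄}(ι(P₁) \ ι(P₂)); (d) ι(P₁) \ ι(P₂) ⊆ int_{X̄} N̄. -/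

import Mathlib

open Set Topology

/-- The image of a set under a multivalued map. -/
def MVImage {Y : Type*} (F : Y → Set Y) (A : Set Y) : Set Y :=
  ⋃ y ∈ A, F y

/-- Upper semicontinuity of a multivalued map: the large counter image of every
closed set is closed. -/
def IsUSC {Y : Type*} [TopologicalSpace Y] (F : Y → Set Y) : Prop :=
  ∀ B : Set Y, IsClosed B → IsClosed {y | (F y ∩ B).Nonempty}

/-- The invariant part of `N` with respect to `F`: points admitting a full
solution (in `N`) through them. -/
def InvPart {Y : Type*} (F : Y → Set Y) (N : Set Y) : Set Y :=
  {y | ∃ σ : ℤ → Y, (∀ n : ℤ, σ n ∈ N) ∧ σ 0 = y ∧ ∀ n : ℤ, σ (n + 1) ∈ F (σ n)}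

/-- The `F`-boundary of a set `A`: `cl A ∩ cl (F(A) \ A)`. -/
def FBoundary {Y : Type*} [TopologicalSpace Y] (F : Y → Set Y) (A : Set Y) : Set Y :=
  closure A ∩ closure (MVImage F A \ A)

/-- `(P₁, P₂)` is a weak index pair for `F` in `N`. -/
structure IsWeakIndexPair {Y : Type*} [TopologicalSpace Y] (F : Y → Set Y)
    (N P₁ P₂ : Set Y) : Prop where
  compact₁ : IsCompact P₁
  compact₂ : IsCompact P₂
  subset₂₁ : P₂ ⊆ P₁
  subset₁N : P₁ ⊆ N
  mapsInto₁ : MVImage F P₁ ∩ N ⊆ P₁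
  mapsInto₂ : MVImage F P₂ ∩ N ⊆ P₂
  fBoundary_subset : FBoundary F P₁ ⊆ P₂
  inv_subset : InvPart F N ⊆ interior (P₁ \ P₂)
  diff_subset : P₁ \ P₂ ⊆ interior N

/-- The function `μ(x,t) = t + (1-t)α(x)`. -/
def muBar {X : Type*} (α : X → ℝ) (p : X × ℝ) : ℝ :=
  p.2 + (1 - p.2) * α p.1

/-- The multivalued map `F̄(x,t) := F(x) × {μ(x,t)}` (defined on `X × ℝ`). -/
def FBar {X : Type*} (F : X → Set X) (α : X → ℝ) (p : X × ℝ) : Set (X × ℝ) :=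
  F p.1 ×ˢ {muBar α p}

/-- The space `X̄ = (P₁\P₂)×{0} ∪ (P₂ ∪ (X \ int N))×[0,1] ∪ X×{1}`,
as a subset of `X × ℝ`. -/
def XBarSet {X : Type*} [TopologicalSpace X] (N P₁ P₂ : Set X) : Set (X × ℝ) :=
  (P₁ \ P₂) ×ˢ {(0 : ℝ)} ∪ (P₂ ∪ (interior N)ᶜ) ×ˢ Icc (0 : ℝ) 1 ∪
    univ ×ˢ {(1 : ℝ)}

/-- The map `F̄` viewed as a multivalued map of the subspace `X̄` into itself. -/
def FBarSub {X : Type*} [TopologicalSpace X] (F : X → Set X) (α : X → ℝ)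
    (N P₁ P₂ : Set X) (q : XBarSet N P₁ P₂) : Set (XBarSet N P₁ P₂) :=
  {r | (r : X × ℝ) ∈ FBar F α (q : X × ℝ)}

/-- The image of a set under the embedding `ι : x ↦ (x,0)`. -/
def iotaImg {X : Type*} (A : Set X) : Set (X × ℝ) :=
  (fun x => (x, (0 : ℝ))) '' A

section Aux

lemma mem_iotaImg {X : Type*} {A : Set X} {p : X × ℝ} :
    p ∈ iotaImg A ↔ p.1 ∈ A ∧ p.2 = 0 := by
  constructor
  · rintro ⟨x, hx, rfl⟩; exact ⟨hx, rfl⟩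
  · rintro ⟨h1, h2⟩
    exact ⟨p.1, h1, Prod.ext rfl h2.symm⟩

lemma iotaImg_eq_prod {X : Type*} (A : Set X) : iotaImg A = A ×ˢ ({0} : Set ℝ) := by
  ext p
  rw [mem_iotaImg, Set.mem_prod, Set.mem_singleton_iff]

lemma mem_mvImage {Y : Type*} {F : Y → Set Y} {A : Set Y} {y : Y} :
    y ∈ MVImage F A ↔ ∃ x ∈ A, y ∈ F x := by
  simp [MVImage]

lemma isCompact_mvImage {Y : Type*} [TopologicalSpace Y] {F : Y → Set Y}
    (hF : IsUSC F) (hFc : ∀ x, IsCompact (F x)) {K : Set Y} (hK : IsCompact K) :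
    IsCompact (MVImage F K) := by
  classical
  apply isCompact_of_finite_subcover
  intro ι U hU hcov
  have key : ∀ x : Y, ∃ t : Finset ι, x ∈ K → F x ⊆ ⋃ i ∈ t, U i := by
    intro x
    by_cases hx : x ∈ K
    · obtain ⟨t, ht⟩ := (hFc x).elim_finite_subcover U hU
        ((Set.subset_biUnion_of_mem (u := fun y => F y) hx).trans hcov)
      exact ⟨t, fun _ => ht⟩
    · exact ⟨∅, fun h => absurd h hx⟩
  choose tset htset using key
  have hVopen : ∀ x : Y, IsOpen {y | F y ⊆ ⋃ i ∈ tset x, U i} := by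
    intro x
    have hcl : IsClosed ((⋃ i ∈ tset x, U i)ᶜ) :=
      (isOpen_biUnion fun i _ => hU i).isClosed_compl
    have h2 := hF _ hcl
    have heq : {y | F y ⊆ ⋃ i ∈ tset x, U i}
        = {y | (F y ∩ (⋃ i ∈ tset x, U i)ᶜ).Nonempty}ᶜ := by
      ext y
      simp only [Set.mem_setOf_eq, Set.mem_compl_iff, Set.inter_compl_nonempty_iff, not_not]
    rw [heq]
    exact h2.isOpen_compl
  obtain ⟨t, htK, htcov⟩ := hK.elim_nhds_subcover
    (fun x => {y | F y ⊆ ⋃ i ∈ tset x, U i})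
    (fun x hx => (hVopen x).mem_nhds (htset x hx))
  refine ⟨t.biUnion tset, ?_⟩
  rintro y hy
  rw [mem_mvImage] at hy
  obtain ⟨x, hxK, hyF⟩ := hy
  have := htcov hxK
  simp only [Set.mem_iUnion] at this
  obtain ⟨z, hzt, hxV⟩ := this
  have hyU : y ∈ ⋃ i ∈ tset z, U i := hxV hyF
  simp only [Set.mem_iUnion] at hyU ⊢
  obtain ⟨i, hi, hyUi⟩ := hyU
  exact ⟨i, Finset.mem_biUnion.mpr ⟨z, hzt, hi⟩, hyUi⟩

end Aux
theorem pBar_weakIndexPair {X : Type*} [TopologicalSpace X]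
    [T1Space X] [NormalSpace X] [LocallyCompactSpace X]
    (F : X → Set X) (hF : IsUSC F) (hFc : ∀ x, IsCompact (F x))
    (N : Set X) (hN : IsCompact N) (hiso : InvPart F N ⊆ interior N)
    (P₁ P₂ : Set X) (hP : IsWeakIndexPair F N P₁ P₂)
    (C D : Set X) (hC : IsCompact C) (hD : IsCompact D) (hCD : Disjoint C D)
    (hCsub : C ⊆ P₁ ∪ (interior N)ᶜ) (hDsub : D ⊆ P₁ ∪ (interior N)ᶜ)
    (hclC : closure (P₁ \ P₂) ⊆ C) (hDcompl : (interior N)ᶜ ⊆ D)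
    (α : X → ℝ) (hα : Continuous α) (hα01 : ∀ x, α x ∈ Icc (0 : ℝ) 1)
    (hαC : ∀ x ∈ C, α x = 0) (hαD : ∀ x ∈ D, α x = 1) :
    IsWeakIndexPair (FBarSub F α N P₁ P₂)
      (Subtype.val ⁻¹' iotaImg ((P₁ ∪ (interior N)ᶜ) ∩ N))
      (Subtype.val ⁻¹' iotaImg P₁)
      (Subtype.val ⁻¹' iotaImg P₂) := by
  classical
  haveI : T4Space X := ⟨⟩
  have hιc : Continuous (fun x : X => (x, (0:ℝ))) :=
    continuous_id.prodMk continuous_const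
  have hP1cl : IsClosed P₁ := hP.compact₁.isClosed
  have hP2cl : IsClosed P₂ := hP.compact₂.isClosed
  -- the copies of P₁, P₂, N̄ sit inside X̄
  have hP1X : iotaImg P₁ ⊆ XBarSet N P₁ P₂ := by
    rintro p hp
    rw [mem_iotaImg] at hp
    by_cases h : p.1 ∈ P₂
    · exact Or.inl (Or.inr ⟨Or.inl h, by rw [hp.2]; exact ⟨le_refl _, zero_le_one⟩⟩)
    · exact Or.inl (Or.inl ⟨⟨hp.1, h⟩, hp.2⟩)
  have hP2X : iotaImg P₂ ⊆ XBarSet N P₁ P₂ := by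
    intro p hp
    exact hP1X (Set.image_mono hP.subset₂₁ hp)
  have hNX : iotaImg ((P₁ ∪ (interior N)ᶜ) ∩ N) ⊆ XBarSet N P₁ P₂ := by
    rintro p hp
    rw [mem_iotaImg] at hp
    rcases hp.1.1 with h | h
    · exact hP1X (mem_iotaImg.mpr ⟨h, hp.2⟩)
    · exact Or.inl (Or.inr ⟨Or.inr h, by rw [hp.2]; exact ⟨le_refl _, zero_le_one⟩⟩)
  -- image of preimage
  have himg : ∀ A : Set X, iotaImg A ⊆ XBarSet N P₁ P₂ →
      Subtype.val '' (Subtype.val ⁻¹' iotaImg A : Set (XBarSet N P₁ P₂)) = iotaImg A := by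
    intro A hsub
    rw [Set.image_preimage_eq_inter_range, Subtype.range_val, Set.inter_eq_left.mpr hsub]
  have hcomp : ∀ A : Set X, IsCompact A → iotaImg A ⊆ XBarSet N P₁ P₂ →
      IsCompact (Subtype.val ⁻¹' iotaImg A : Set (XBarSet N P₁ P₂)) := by
    intro A hA hsub
    rw [IsEmbedding.subtypeVal.isCompact_iff, himg A hsub]
    exact hA.image hιc
  -- general mapsInto
  have hmaps : ∀ A : Set X, MVImage F A ∩ N ⊆ A →
      MVImage (FBarSub F α N P₁ P₂) (Subtype.val ⁻¹' iotaImg A) ∩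
        (Subtype.val ⁻¹' iotaImg ((P₁ ∪ (interior N)ᶜ) ∩ N)) ⊆
        Subtype.val ⁻¹' iotaImg A := by
    intro A hA r hr
    obtain ⟨hr1, hr2⟩ := hr
    rw [Set.mem_preimage, mem_iotaImg] at hr2
    rw [mem_mvImage] at hr1
    obtain ⟨q, hq, hrF⟩ := hr1
    rw [Set.mem_preimage, mem_iotaImg] at hq
    have hrF' : ((r : X × ℝ)).1 ∈ F ((q : X × ℝ)).1 ∧
        ((r : X × ℝ)).2 ∈ ({muBar α ((q : X × ℝ))} : Set ℝ) := hrF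
    rw [Set.mem_preimage, mem_iotaImg]
    exact ⟨hA ⟨mem_mvImage.mpr ⟨_, hq.1, hrF'.1⟩, hr2.1.2⟩, hr2.2⟩
  refine ⟨hcomp P₁ hP.compact₁ hP1X, hcomp P₂ hP.compact₂ hP2X,
    Set.preimage_mono (Set.image_mono hP.subset₂₁),
    Set.preimage_mono (Set.image_mono (fun x hx => ⟨Or.inl hx, hP.subset₁N hx⟩)),
    hmaps P₁ hP.mapsInto₁, hmaps P₂ hP.mapsInto₂, ?_, ?_, ?_⟩
  · -- FBoundary
    intro q hq
    obtain ⟨hq1, hq2⟩ := hq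
    have hclP1 : closure (iotaImg P₁) = iotaImg P₁ :=
      IsClosed.closure_eq (by exact (hP.compact₁.image hιc).isClosed)
    rw [IsInducing.subtypeVal.closure_eq_preimage_closure_image, Set.mem_preimage,
      himg P₁ hP1X, hclP1, mem_iotaImg] at hq1
    rw [IsInducing.subtypeVal.closure_eq_preimage_closure_image, Set.mem_preimage] at hq2
    have hTsub : Subtype.val '' (MVImage (FBarSub F α N P₁ P₂)
          (Subtype.val ⁻¹' iotaImg P₁) \ (Subtype.val ⁻¹' iotaImg P₁))
        ⊆ ((MVImage F P₁ \ P₁) ×ˢ ({0} : Set ℝ)) ∪ (MVImage F P₂ ×ˢ (univ : Set ℝ)) := by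
      rintro p ⟨r, ⟨hrM, hrS⟩, rfl⟩
      rw [mem_mvImage] at hrM
      obtain ⟨s, hs, hrF⟩ := hrM
      rw [Set.mem_preimage, mem_iotaImg] at hs
      have hrF' : ((r : X × ℝ)).1 ∈ F ((s : X × ℝ)).1 ∧
          ((r : X × ℝ)).2 ∈ ({muBar α ((s : X × ℝ))} : Set ℝ) := hrF
      have hr2 : ((r : X × ℝ)).2 = α ((s : X × ℝ)).1 := by
        have h2 : ((r : X × ℝ)).2 = muBar α ((s : X × ℝ)) := hrF'.2
        rw [h2]; simp [muBar, hs.2]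
      by_cases hsP2 : ((s : X × ℝ)).1 ∈ P₂
      · exact Or.inr ⟨mem_mvImage.mpr ⟨_, hsP2, hrF'.1⟩, trivial⟩
      · have hα0 : α ((s : X × ℝ)).1 = 0 := hαC _ (hclC (subset_closure ⟨hs.1, hsP2⟩))
        have hrv2 : ((r : X × ℝ)).2 = 0 := by rw [hr2, hα0]
        have hrP1 : ((r : X × ℝ)).1 ∉ P₁ := by
          intro hc
          exact hrS (by rw [Set.mem_preimage, mem_iotaImg]; exact ⟨hc, hrv2⟩)
        exact Or.inl ⟨⟨mem_mvImage.mpr ⟨_, hs.1, hrF'.1⟩, hrP1⟩, hrv2⟩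
    have hq2' := closure_mono hTsub hq2
    rw [closure_union] at hq2'
    rcases hq2' with h | h
    · rw [closure_prod_eq] at h
      have hfb : ((q : X × ℝ)).1 ∈ FBoundary F P₁ := ⟨subset_closure hq1.1, h.1⟩
      exact Set.mem_preimage.mpr (mem_iotaImg.mpr ⟨hP.fBoundary_subset hfb, hq1.2⟩)
    · have hBcl : closure (MVImage F P₂ ×ˢ (univ : Set ℝ)) = MVImage F P₂ ×ˢ univ := by
        rw [closure_prod_eq, closure_univ,
          ((isCompact_mvImage hF hFc hP.compact₂).isClosed).closure_eq]
      rw [hBcl] at h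
      exact Set.mem_preimage.mpr (mem_iotaImg.mpr
        ⟨hP.mapsInto₂ ⟨h.1, hP.subset₁N hq1.1⟩, hq1.2⟩)
  · -- inv_subset
    intro q hq
    obtain ⟨σ, hσN, hσ0, hσF⟩ := hq
    have hmem : ∀ n : ℤ, ((σ n : X × ℝ)).1 ∈ (P₁ ∪ (interior N)ᶜ) ∩ N ∧
        ((σ n : X × ℝ)).2 = 0 := by
      intro n
      have := hσN n
      rw [Set.mem_preimage, mem_iotaImg] at this
      exact this
    have hx : ((q : X × ℝ)).1 ∈ InvPart F N := by
      refine ⟨fun n => ((σ n : X × ℝ)).1, fun n => (hmem n).1.2, by show ((σ 0 : X × ℝ)).1 = _; rw [hσ0],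
        fun n => ?_⟩
      have hrF' : ((σ (n+1) : X × ℝ)).1 ∈ F ((σ n : X × ℝ)).1 ∧
          ((σ (n+1) : X × ℝ)).2 ∈ ({muBar α ((σ n : X × ℝ))} : Set ℝ) := hσF n
      exact hrF'.1
    have hxint := hP.inv_subset hx
    have hq0 : ((q : X × ℝ)).2 = 0 := by rw [← hσ0]; exact (hmem 0).2
    have hVopen : IsOpen ((interior (P₁ \ P₂) ×ˢ Iio (1:ℝ))) :=
      isOpen_interior.prod isOpen_Iio
    have hsub : (Subtype.val ⁻¹' (interior (P₁ \ P₂) ×ˢ Iio (1:ℝ)) :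
        Set (XBarSet N P₁ P₂)) ⊆
        (Subtype.val ⁻¹' iotaImg P₁) \ (Subtype.val ⁻¹' iotaImg P₂) := by
      intro r hr
      have hr' : ((r : X × ℝ)).1 ∈ interior (P₁ \ P₂) ∧ ((r : X × ℝ)).2 < 1 := hr
      have hrd : ((r : X × ℝ)).1 ∈ P₁ \ P₂ := interior_subset hr'.1
      rcases r.2 with (h | h) | h
      · refine ⟨Set.mem_preimage.mpr (mem_iotaImg.mpr ⟨h.1.1, h.2⟩), fun hc => ?_⟩
        rw [Set.mem_preimage, mem_iotaImg] at hc
        exact h.1.2 hc.1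
      · rcases h.1 with h' | h'
        · exact absurd h' hrd.2
        · exact absurd (hP.diff_subset hrd) h'
      · exact absurd h.2 (ne_of_lt hr'.2)
    refine interior_maximal hsub (hVopen.preimage continuous_subtype_val) ?_
    exact ⟨hxint, by rw [hq0]; exact Set.mem_Iio.mpr zero_lt_one⟩
  · -- diff_subset
    intro q hq
    obtain ⟨hq1, hq2⟩ := hq
    rw [Set.mem_preimage, mem_iotaImg] at hq1
    have hnp2 : ((q : X × ℝ)).1 ∉ P₂ := by
      intro hc
      exact hq2 (Set.mem_preimage.mpr (mem_iotaImg.mpr ⟨hc, hq1.2⟩))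
    have hpi : ((q : X × ℝ)).1 ∈ interior N := hP.diff_subset ⟨hq1.1, hnp2⟩
    have hVopen : IsOpen (((interior N ∩ P₂ᶜ) ×ˢ Iio (1:ℝ))) :=
      (isOpen_interior.inter hP2cl.isOpen_compl).prod isOpen_Iio
    have hsub : (Subtype.val ⁻¹' ((interior N ∩ P₂ᶜ) ×ˢ Iio (1:ℝ)) :
        Set (XBarSet N P₁ P₂)) ⊆
        Subtype.val ⁻¹' iotaImg ((P₁ ∪ (interior N)ᶜ) ∩ N) := by
      intro r hr
      have hr' : (((r : X × ℝ)).1 ∈ interior N ∧ ((r : X × ℝ)).1 ∉ P₂) ∧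
          ((r : X × ℝ)).2 < 1 := hr
      rcases r.2 with (h | h) | h
      · exact Set.mem_preimage.mpr (mem_iotaImg.mpr
          ⟨⟨Or.inl h.1.1, hP.subset₁N h.1.1⟩, h.2⟩)
      · rcases h.1 with h' | h'
        · exact absurd h' hr'.1.2
        · exact absurd hr'.1.1 h'
      · exact absurd h.2 (ne_of_lt hr'.2)
    refine interior_maximal hsub (hVopen.preimage continuous_subtype_val) ?_
    exact ⟨⟨hpi, hnp2⟩, by rw [hq1.2]; exact Set.mem_Iio.mpr zero_lt_one⟩
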